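/- Let R be a unique factorization domain, let M be an n×n matrix with entries in R, let ℓ ∈ R be irreducible, and let 1 ≤ d ≤ n. If ℓ divides every d×d minor of M (i.e., the determinant of every d×d submatrix obtained by choosing d rows and d columns of M), then ℓ^{n−d+1} divides det(M). -/

import Mathlib

/-- If `a` divides every entry of an `m × m` matrix, then `a ^ m` divides its determinant. -/
lemma aux_pow_dvd_det {R : Type*} [CommRing R] {m : ℕ} (a : R)
    (A : Matrix (Fin m) (Fin m) R) (h : ∀ i j, a ∣ A i j) : a ^ m ∣ A.det := by
  have hB : ∀ i j, A i j = a * (h i j).choose := fun i j => (h i j).choose_spec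
  have : A = a • Matrix.of (fun i j => (h i j).choose) := by
    ext i j; simpa using hB i j
  rw [this, Matrix.det_smul]
  simpa using Dvd.intro _ rfl

/-- If `p` is prime, `k ≥ 1`, and `p ^ (k*e+1) ∣ x ^ k`, then `p ^ (e+1) ∣ x`. -/
lemma aux_prime_extract {R : Type*} [CommRing R] [IsDomain R] {p : R} (hp : Prime p)
    {k : ℕ} (hk : 1 ≤ k) : ∀ (e : ℕ) (x : R), p ^ (k * e + 1) ∣ x ^ k → p ^ (e + 1) ∣ x := by
  intro e
  induction e with
  | zero =>
    intro x h
    simpa using hp.dvd_of_dvd_pow (dvd_trans (dvd_pow_self p (Nat.succ_ne_zero _)) h)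
  | succ e ih =>
    intro x h
    have hpx : p ∣ x := hp.dvd_of_dvd_pow
      (dvd_trans (dvd_pow_self p (Nat.succ_ne_zero _)) h)
    obtain ⟨y, rfl⟩ := hpx
    have hxk : (p * y) ^ k = p ^ k * y ^ k := mul_pow p y k
    rw [hxk] at h
    have hsplit : p ^ (k * (e + 1) + 1) = p ^ k * p ^ (k * e + 1) := by
      rw [← pow_add]; ring_nf
    rw [hsplit] at h
    have hpk : (p ^ k : R) ≠ 0 := pow_ne_zero _ hp.ne_zero
    have h' : p ^ (k * e + 1) ∣ y ^ k := by
      obtain ⟨c, hc⟩ := h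
      refine ⟨c, ?_⟩
      apply mul_left_cancel₀ hpk
      rw [hc]; ring
    have := ih y h'
    calc p ^ (e + 1 + 1) = p * p ^ (e + 1) := by ring
    _ ∣ p * y := mul_dvd_mul_left p this

/-- Over a UFD, if an irreducible `ℓ` divides every `d × d` minor of
an `n × n` matrix `M` (with `1 ≤ d ≤ n`), then `ℓ^{n−d+1}` divides `det M`. -/
theorem stmt18 {R : Type*} [CommRing R] [IsDomain R] [UniqueFactorizationMonoid R]
    {n d : ℕ} (hd1 : 1 ≤ d) (hdn : d ≤ n)
    (M : Matrix (Fin n) (Fin n) R) (l : R) (hl : Irreducible l)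
    (hminor : ∀ r c : Fin d → Fin n, Function.Injective r → Function.Injective c →
      l ∣ (M.submatrix r c).det) :
    l ^ (n - d + 1) ∣ M.det := by
  have hlp : Prime l := hl.prime
  have key : ∀ k, d ≤ k → ∀ (r c : Fin k → Fin n), Function.Injective r →
      Function.Injective c → l ^ (k - d + 1) ∣ (M.submatrix r c).det := by
    intro k
    induction k with
    | zero => intro h; omega
    | succ k ih =>
      intro hdk r c hr hc
      rcases Nat.lt_or_ge d (k + 1) with hlt | hge
      · -- d ≤ k, use inductive step
        have hdk' : d ≤ k := by omega
        set N : Matrix (Fin (k + 1)) (Fin (k + 1)) R := M.submatrix r c with hN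
        set e : ℕ := k - d + 1 with he
        have hentry : ∀ i j, l ^ e ∣ (N.adjugate) i j := by
          intro i j
          rw [Matrix.adjugate_fin_succ_eq_det_submatrix]
          have : (N.submatrix j.succAbove i.succAbove) =
              M.submatrix (r ∘ j.succAbove) (c ∘ i.succAbove) := rfl
          rw [this]
          exact Dvd.dvd.mul_left
            (ih hdk' _ _ (hr.comp (Fin.succAbove_right_injective))
              (hc.comp (Fin.succAbove_right_injective))) _
        have hadj : l ^ (e * (k + 1)) ∣ (N.adjugate).det := by
          rw [pow_mul]
          exact aux_pow_dvd_det _ _ hentry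
        rw [Matrix.det_adjugate] at hadj
        simp only [Fintype.card_fin, Nat.add_sub_cancel] at hadj
        have hk1 : 1 ≤ k := by omega
        have h' : l ^ (k * e + 1) ∣ N.det ^ k := by
          refine dvd_trans (pow_dvd_pow l ?_) hadj
          have : 1 ≤ e := by omega
          calc k * e + 1 ≤ k * e + e := by omega
          _ = e * (k + 1) := by ring
        have := aux_prime_extract hlp hk1 e N.det h'
        have heq : k + 1 - d + 1 = e + 1 := by omega
        rw [heq]; exact this
      · -- d = k + 1 : base case
        have hdeq : d = k + 1 := by omega
        have h1 : k + 1 - d + 1 = 1 := by omega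
        rw [h1, pow_one]
        have hm := hminor (r ∘ (finCongr hdeq)) (c ∘ (finCongr hdeq))
          (hr.comp (finCongr hdeq).injective) (hc.comp (finCongr hdeq).injective)
        rw [show M.submatrix (r ∘ (finCongr hdeq)) (c ∘ (finCongr hdeq)) =
            (M.submatrix r c).submatrix (finCongr hdeq) (finCongr hdeq) from rfl,
          Matrix.det_submatrix_equiv_self] at hm
        exact hm
  have := key n hdn id id Function.injective_id Function.injective_id
  simpa using this
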